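/- Suppose A(λ, r) is nonempty for every (λ, r) ∈ ℝᵐ × (0, ∞) and the set of optimal dual solutions is nonempty. Then Algorithm 1 terminates finitely: there is no infinite sequence {(xᵏ, t_k, λᵏ, r_k)} with t_{k+1} > 0, (x^{k+1}, t_{k+1}) ∈ A(λᵏ, r_k), λ^{k+1} = λᵏ + (r_k/t_{k+1}) h(x^{k+1}) and r_{k+1} = 2 r_k for all k; equivalently, any run of Algorithm 1 reaches an index k̄ with t_{k̄+1} = 0, and then x^{k̄+1} is an optimal primal solution and (λ^{k̄}, r_{k̄}) is an optimal dual solution. -/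

import Mathlib

noncomputable section

open Classical in
/-- The extended-real-valued smoothing function `L̃_{λ,r}(x,t)`. -/
def Ltilde {n m : ℕ} (f : EuclideanSpace ℝ (Fin n) → ℝ)
    (h : EuclideanSpace ℝ (Fin n) → EuclideanSpace ℝ (Fin m))
    (lam : EuclideanSpace ℝ (Fin m)) (r : ℝ)
    (x : EuclideanSpace ℝ (Fin n)) (t : ℝ) : EReal :=
  if 0 < t then
    (((f x + (inner ℝ lam (h x) : ℝ) + r / (2 * t) * ‖h x‖ ^ 2 + r / 2 * t) : ℝ) : EReal)
  else if t = 0 ∧ h x = 0 then ((f x : ℝ) : EReal)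
  else ⊤

/-- The augmented dual function `q̃(λ, r) = inf_{(x,t)} L̃_{λ,r}(x,t)`. -/
def qtilde {n m : ℕ} (f : EuclideanSpace ℝ (Fin n) → ℝ)
    (h : EuclideanSpace ℝ (Fin n) → EuclideanSpace ℝ (Fin m))
    (lam : EuclideanSpace ℝ (Fin m)) (r : ℝ) : EReal :=
  ⨅ p : EuclideanSpace ℝ (Fin n) × ℝ, Ltilde f h lam r p.1 p.2

/-- The set `A(λ, r)` of global minimizers of `L̃_{λ,r}`. -/
def Aset {n m : ℕ} (f : EuclideanSpace ℝ (Fin n) → ℝ)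
    (h : EuclideanSpace ℝ (Fin n) → EuclideanSpace ℝ (Fin m))
    (lam : EuclideanSpace ℝ (Fin m)) (r : ℝ) :
    Set (EuclideanSpace ℝ (Fin n) × ℝ) :=
  {p | Ltilde f h lam r p.1 p.2 = qtilde f h lam r}

section helpers

variable {n m : ℕ} (f : EuclideanSpace ℝ (Fin n) → ℝ)
    (h : EuclideanSpace ℝ (Fin n) → EuclideanSpace ℝ (Fin m))

lemma qtilde_le_pos (lam : EuclideanSpace ℝ (Fin m)) (r : ℝ)
    (x : EuclideanSpace ℝ (Fin n)) (t : ℝ) (ht : 0 < t) :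
    qtilde f h lam r ≤
      (((f x + (inner ℝ lam (h x) : ℝ) + r / (2 * t) * ‖h x‖ ^ 2 + r / 2 * t) : ℝ) : EReal) := by
  have h1 : qtilde f h lam r ≤ Ltilde f h lam r x t := iInf_le _ (x, t)
  rwa [Ltilde, if_pos ht] at h1

lemma qtilde_le_feasible (lam : EuclideanSpace ℝ (Fin m)) (r : ℝ) (hr : 0 < r)
    (x : EuclideanSpace ℝ (Fin n)) (hx : h x = 0) :
    qtilde f h lam r ≤ ((f x : ℝ) : EReal) := by
  by_contra hcon
  push_neg at hcon
  rw [EReal.lt_iff_exists_real_btwn] at hcon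
  obtain ⟨c, hc1, hc2⟩ := hcon
  have hc1' : f x < c := by exact_mod_cast hc1
  set t : ℝ := 2 * (c - f x) / r with hts
  have ht : 0 < t := by
    apply div_pos (by linarith) hr
  have hle := qtilde_le_pos f h lam r x t ht
  rw [hx] at hle
  simp only [inner_zero_right, norm_zero] at hle
  have hceq : f x + 0 + r / (2 * t) * 0 ^ 2 + r / 2 * t = c := by
    rw [hts]; field_simp; ring
  rw [hceq] at hle
  exact absurd (lt_of_le_of_lt hle hc2) (lt_irrefl _)

lemma min_pos (lam : EuclideanSpace ℝ (Fin m)) (r : ℝ) (hr : 0 < r)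
    (x : EuclideanSpace ℝ (Fin n)) (t : ℝ) (ht : 0 < t)
    (hmem : (x, t) ∈ Aset f h lam r) :
    ‖h x‖ = t ∧
      qtilde f h lam r = (((f x + (inner ℝ lam (h x) : ℝ) + r * t) : ℝ) : EReal) := by
  have hq : (((f x + (inner ℝ lam (h x) : ℝ) + r / (2 * t) * ‖h x‖ ^ 2 + r / 2 * t) : ℝ) : EReal)
      = qtilde f h lam r := by
    have h0 : Ltilde f h lam r x t = qtilde f h lam r := hmem
    rwa [Ltilde, if_pos ht] at h0
  by_cases hc : ‖h x‖ = 0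
  · exfalso
    have hx0 : h x = 0 := norm_eq_zero.mp hc
    have h0 : qtilde f h lam r ≤ ((f x : ℝ) : EReal) := qtilde_le_feasible f h lam r hr x hx0
    rw [← hq] at h0
    have h1 : f x + (inner ℝ lam (h x) : ℝ) + r / (2 * t) * ‖h x‖ ^ 2 + r / 2 * t ≤ f x := by
      exact_mod_cast h0
    rw [hx0] at h1
    simp only [inner_zero_right, norm_zero] at h1
    nlinarith
  · set c := ‖h x‖ with hcdef
    have hcpos : 0 < c := lt_of_le_of_ne (norm_nonneg _) (Ne.symm hc)
    have h2 := qtilde_le_pos f h lam r x c hcpos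
    rw [← hq] at h2
    have hre : f x + (inner ℝ lam (h x) : ℝ) + r / (2 * t) * c ^ 2 + r / 2 * t ≤
        f x + (inner ℝ lam (h x) : ℝ) + r / (2 * c) * c ^ 2 + r / 2 * c := by
      exact_mod_cast h2
    have hsimp : r / (2 * c) * c ^ 2 + r / 2 * c = r * c := by field_simp; ring
    have hle2 : r / (2 * t) * c ^ 2 + r / 2 * t ≤ r * c := by linarith
    have hct : c = t := by
      have h2t : (0 : ℝ) < 2 * t := by linarith
      have hmul := mul_le_mul_of_nonneg_right hle2 h2t.le
      have hexp : (r / (2 * t) * c ^ 2 + r / 2 * t) * (2 * t) = r * c ^ 2 + r * t ^ 2 := by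
        field_simp
      rw [hexp] at hmul
      have hsq : (c - t) ^ 2 ≤ 0 := by nlinarith
      have h0 : c - t = 0 := by
        have := sq_nonneg (c - t)
        nlinarith
      linarith
    refine ⟨hct, ?_⟩
    rw [← hq]
    norm_cast
    rw [hct]
    field_simp
    ring

end helpers

/-- if `A(λ, r)` is always nonempty and an optimal dual solution exists, then
Algorithm 1 terminates finitely: there is no infinite run with `t_{k+1} > 0` for all `k`;
and whenever a run stops (i.e. `(x̂, 0) ∈ A(λᵏ, r_k)`), then `x̂` is an optimal primal
solution and `(λᵏ, r_k)` is an optimal dual solution. -/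
theorem stmt9 {n m : ℕ} (f : EuclideanSpace ℝ (Fin n) → ℝ)
    (h : EuclideanSpace ℝ (Fin n) → EuclideanSpace ℝ (Fin m))
    (hf : ContDiff ℝ 2 f) (hh : ContDiff ℝ 2 h)
    (hA : ∀ (lam : EuclideanSpace ℝ (Fin m)) (r : ℝ), 0 < r → (Aset f h lam r).Nonempty)
    (hdual : ∃ (lambar : EuclideanSpace ℝ (Fin m)) (rbar : ℝ), 0 < rbar ∧
      ∀ (lam' : EuclideanSpace ℝ (Fin m)) (r' : ℝ), 0 < r' →
        qtilde f h lam' r' ≤ qtilde f h lambar rbar) :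
    (¬ ∃ (x : ℕ → EuclideanSpace ℝ (Fin n)) (t : ℕ → ℝ)
        (lam : ℕ → EuclideanSpace ℝ (Fin m)) (rr : ℕ → ℝ),
      0 < rr 0 ∧ ∀ k, 0 < t (k + 1) ∧
        (x (k + 1), t (k + 1)) ∈ Aset f h (lam k) (rr k) ∧
        lam (k + 1) = lam k + (rr k / t (k + 1)) • h (x (k + 1)) ∧
        rr (k + 1) = 2 * rr k) ∧
    (∀ (xh : EuclideanSpace ℝ (Fin n)) (lamk : EuclideanSpace ℝ (Fin m)) (rk : ℝ),
      0 < rk → (xh, (0 : ℝ)) ∈ Aset f h lamk rk →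
        (h xh = 0 ∧ ∀ x' : EuclideanSpace ℝ (Fin n), h x' = 0 → f xh ≤ f x') ∧
        (∀ (lam' : EuclideanSpace ℝ (Fin m)) (r' : ℝ), 0 < r' →
          qtilde f h lam' r' ≤ qtilde f h lamk rk)) := by
  obtain ⟨lb, rb, hrb, hopt⟩ := hdual
  constructor
  · rintro ⟨x, t, lam, rr, hr0, hstep⟩
    -- positivity and monotonicity of rr
    have hrpos : ∀ k, 0 < rr k := by
      intro k
      induction k with
      | zero => exact hr0
      | succ k ih => rw [(hstep k).2.2.2]; linarith
    have hmono : ∀ k j, rr k ≤ rr (k + j) := by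
      intro k j
      induction j with
      | zero => simp
      | succ j ih =>
        have h2 : rr (k + (j + 1)) = 2 * rr (k + j) := (hstep (k + j)).2.2.2
        rw [h2]; linarith [hrpos (k + j)]
    -- key inequality from dual optimality
    have key : ∀ k, (rr k - rb) * t (k + 1) ≤ (inner ℝ (lb - lam k) (h (x (k + 1))) : ℝ) := by
      intro k
      obtain ⟨ht1, hmem1, _, _⟩ := hstep k
      obtain ⟨hnorm, hqval⟩ := min_pos f h (lam k) (rr k) (hrpos k) _ _ ht1 hmem1
      have h1 : qtilde f h lb rb ≤
          ((f (x (k + 1)) + (inner ℝ lb (h (x (k + 1))) : ℝ) + rb * t (k + 1) : ℝ) : EReal) := by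
        have h2 := qtilde_le_pos f h lb rb (x (k + 1)) (t (k + 1)) ht1
        rw [hnorm] at h2
        have heq : rb / (2 * t (k + 1)) * t (k + 1) ^ 2 + rb / 2 * t (k + 1)
            = rb * t (k + 1) := by field_simp; ring
        have heq2 : f (x (k + 1)) + (inner ℝ lb (h (x (k + 1))) : ℝ)
              + rb / (2 * t (k + 1)) * t (k + 1) ^ 2 + rb / 2 * t (k + 1)
            = f (x (k + 1)) + (inner ℝ lb (h (x (k + 1))) : ℝ) + rb * t (k + 1) := by
          linarith
        rwa [heq2] at h2
      have h3 : ((f (x (k + 1)) + (inner ℝ (lam k) (h (x (k + 1))) : ℝ) + rr k * t (k + 1) : ℝ) : EReal)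
          ≤ ((f (x (k + 1)) + (inner ℝ lb (h (x (k + 1))) : ℝ) + rb * t (k + 1) : ℝ) : EReal) := by
        calc _ = qtilde f h (lam k) (rr k) := hqval.symm
        _ ≤ qtilde f h lb rb := hopt (lam k) (rr k) (hrpos k)
        _ ≤ _ := h1
      have h4 : f (x (k + 1)) + (inner ℝ (lam k) (h (x (k + 1))) : ℝ) + rr k * t (k + 1)
          ≤ f (x (k + 1)) + (inner ℝ lb (h (x (k + 1))) : ℝ) + rb * t (k + 1) := by
        exact_mod_cast h3
      have h5 : (inner ℝ (lb - lam k) (h (x (k + 1))) : ℝ)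
          = (inner ℝ lb (h (x (k + 1))) : ℝ) - (inner ℝ (lam k) (h (x (k + 1))) : ℝ) :=
        inner_sub_left _ _ _
      rw [h5]; nlinarith
    -- distance decrease
    have Dstep : ∀ k, ‖lb - lam (k + 1)‖ ^ 2 ≤ ‖lb - lam k‖ ^ 2 - (rr k) ^ 2 + 2 * rr k * rb := by
      intro k
      obtain ⟨ht1, hmem1, hlam1, _⟩ := hstep k
      obtain ⟨hnorm, -⟩ := min_pos f h (lam k) (rr k) (hrpos k) _ _ ht1 hmem1
      have hdiff : lb - lam (k + 1) = (lb - lam k) - (rr k / t (k + 1)) • h (x (k + 1)) := by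
        rw [hlam1, sub_add_eq_sub_sub]
      set u := lb - lam k
      set cc : ℝ := rr k / t (k + 1) with hccdef
      set v := h (x (k + 1))
      have hccpos : 0 < cc := div_pos (hrpos k) ht1
      have hct : cc * t (k + 1) = rr k := div_mul_cancel₀ _ (ne_of_gt ht1)
      have hexp : ‖u - cc • v‖ ^ 2 = ‖u‖ ^ 2 - 2 * (cc * (inner ℝ u v : ℝ)) + cc ^ 2 * ‖v‖ ^ 2 := by
        rw [norm_sub_sq_real, real_inner_smul_right, norm_smul]
        rw [Real.norm_eq_abs, abs_of_pos hccpos]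
        ring
      have h6 : cc ^ 2 * ‖v‖ ^ 2 = rr k ^ 2 := by
        rw [hnorm, ← mul_pow, hct]
      have h7 : cc * ((rr k - rb) * t (k + 1)) ≤ cc * (inner ℝ u v : ℝ) :=
        mul_le_mul_of_nonneg_left (key k) hccpos.le
      have htne : t (k + 1) ≠ 0 := ne_of_gt ht1
      have h8 : cc * ((rr k - rb) * t (k + 1)) = rr k * (rr k - rb) := by
        rw [hccdef]; field_simp
      rw [hdiff, hexp, h6]
      nlinarith [h7, h8]
    -- get K with rr K large
    have hrpow : ∀ k, rr k = 2 ^ k * rr 0 := by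
      intro k
      induction k with
      | zero => simp
      | succ k ih => rw [(hstep k).2.2.2, ih]; ring
    obtain ⟨N, hN⟩ := pow_unbounded_of_one_lt ((2 * rb + 1) / rr 0) (one_lt_two (α := ℝ))
    have hK : 2 * rb + 1 ≤ rr N := by
      rw [hrpow N]
      rw [div_lt_iff₀ hr0] at hN
      nlinarith
    have hge : ∀ j, 2 * rb + 1 ≤ rr (N + j) := fun j => le_trans hK (hmono N j)
    have hdec : ∀ j : ℕ, ‖lb - lam (N + j)‖ ^ 2 ≤ ‖lb - lam N‖ ^ 2 - j := by
      intro j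
      induction j with
      | zero => simp
      | succ j ih =>
        have h1 := Dstep (N + j)
        have h2 := hge j
        have h3 : (rr (N + j)) ^ 2 - 2 * rr (N + j) * rb ≥ 1 := by nlinarith
        have h4 : N + (j + 1) = (N + j) + 1 := by omega
        rw [h4]
        push_cast
        push_cast at ih
        linarith
    obtain ⟨J, hJ⟩ := exists_nat_gt (‖lb - lam N‖ ^ 2)
    have h1 := hdec J
    have h2 : (0 : ℝ) ≤ ‖lb - lam (N + J)‖ ^ 2 := sq_nonneg _
    linarith
  · intro xh lamk rk hrk hmem
    have hfin : qtilde f h lamk rk ≠ ⊤ := by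
      have := qtilde_le_pos f h lamk rk 0 1 one_pos
      exact ne_top_of_le_ne_top (EReal.coe_ne_top _) this
    have hmem' : Ltilde f h lamk rk xh 0 = qtilde f h lamk rk := hmem
    rw [Ltilde, if_neg (lt_irrefl 0)] at hmem'
    have hfeas : h xh = 0 := by
      by_contra hne
      rw [if_neg (by tauto)] at hmem'
      exact hfin hmem'.symm
    rw [if_pos ⟨rfl, hfeas⟩] at hmem'
    refine ⟨⟨hfeas, ?_⟩, ?_⟩
    · intro x' hx'
      have h1 := qtilde_le_feasible f h lamk rk hrk x' hx'
      rw [← hmem'] at h1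
      exact_mod_cast h1
    · intro lam' r' hr'
      have h1 := qtilde_le_feasible f h lam' r' hr' xh hfeas
      exact le_trans h1 (le_of_eq hmem')
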